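/- Let n ≥ 1 and let f be a solution of the n×n Pulsar puzzle. Then for every column c with 1 ≤ c ≤ n, the top-row entry satisfies f(1,c) = n + 1 − (number of cells of C_n in column c); equivalently, f(1,c) is one more than the number of cells in column c not belonging to C_n. -/

import Mathlib

/-- The circled set `C n` of the `n × n` Pulsar puzzle, as a predicate on cells `(r, c)`
(1-indexed).  `C 1 = {(1,1)}`, and for `n ≥ 2`, a cell `(r,c)` of the grid is circled iff
`r = 1`, or `r ≥ 2`, `c ≥ 2` and `(n - c + 1, r - 1)` is circled in `C (n-1)`. -/
def Circled : ℕ → ℕ × ℕ → Prop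
  | 0, _ => False
  | 1, p => p = (1, 1)
  | (n + 2), (r, c) =>
      1 ≤ r ∧ r ≤ n + 2 ∧ 1 ≤ c ∧ c ≤ n + 2 ∧
        (r = 1 ∨ (2 ≤ r ∧ 2 ≤ c ∧ Circled (n + 1) (n + 2 - c + 1, r - 1)))

/-- `f` is a Latin square of order `n`: on the grid of cells `(r, c)` with `1 ≤ r, c ≤ n`
it takes values in `{1, …, n}`, with distinct values on distinct cells of any one row
and on distinct cells of any one column. -/
def IsLatinSquare (n : ℕ) (f : ℕ × ℕ → ℕ) : Prop :=
  (∀ r c, 1 ≤ r → r ≤ n → 1 ≤ c → c ≤ n → 1 ≤ f (r, c) ∧ f (r, c) ≤ n) ∧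
  (∀ r c₁ c₂, 1 ≤ r → r ≤ n → 1 ≤ c₁ → c₁ ≤ n → 1 ≤ c₂ → c₂ ≤ n → c₁ ≠ c₂ →
    f (r, c₁) ≠ f (r, c₂)) ∧
  (∀ r₁ r₂ c, 1 ≤ r₁ → r₁ ≤ n → 1 ≤ r₂ → r₂ ≤ n → 1 ≤ c → c ≤ n → r₁ ≠ r₂ →
    f (r₁, c) ≠ f (r₂, c))

/-- `f` is a solution of the `n × n` Pulsar puzzle: a Latin square of order `n` such that
each circled entry equals the number of circled cells carrying that same value. -/
def IsPulsarSolution (n : ℕ) (f : ℕ × ℕ → ℕ) : Prop :=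
  IsLatinSquare n f ∧
    ∀ p, Circled n p → f p = Set.ncard {q : ℕ × ℕ | Circled n q ∧ f q = f p}

/-- Number of circled cells in column `c` (closed form). -/
def Apul (n c : ℕ) : ℕ :=
  if (2*c ≤ n+1 ∧ c % 2 = 1) ∨ (n+1 ≤ 2*c ∧ (n-c) % 2 = 0) then c else n+1-c

/-- Number of circled cells in row `r` (closed form). -/
def Bpul (n r : ℕ) : ℕ := if r = 1 then n else Apul (n-1) (r-1)

lemma Apul_range {n c : ℕ} (h1 : 1 ≤ c) (h2 : c ≤ n) : 1 ≤ Apul n c ∧ Apul n c ≤ n := by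
  unfold Apul; split_ifs <;> omega

lemma Apul_invol {n c : ℕ} (h1 : 1 ≤ c) (h2 : c ≤ n) : Apul n (Apul n c) = c := by
  unfold Apul; split_ifs <;> omega

lemma Apul_one {n : ℕ} (hn : 1 ≤ n) : Apul n 1 = 1 := by
  unfold Apul; split_ifs <;> omega

lemma Apul_rec {n c : ℕ} (h1 : 2 ≤ c) (h2 : c ≤ n + 1) :
    Apul (n+2) c = Apul n (n+2-c) + 1 := by
  unfold Apul; split_ifs <;> omega

lemma Bpul_one (n : ℕ) : Bpul n 1 = n := by simp [Bpul]

lemma Bpul_range {n r : ℕ} (h1 : 1 ≤ r) (h2 : r ≤ n) : 1 ≤ Bpul n r ∧ Bpul n r ≤ n := by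
  unfold Bpul
  split_ifs with h
  · omega
  · have := Apul_range (n := n-1) (c := r-1) (by omega) (by omega)
    omega

lemma Apul_eq_Bpul {n c : ℕ} (h1 : 2 ≤ c) (h2 : c ≤ n + 2) :
    Apul (n+2) c = Bpul (n+1) (n+2-c+1) + 1 := by
  rcases eq_or_lt_of_le h2 with rfl | hlt
  · have : n+2-(n+2)+1 = 1 := by omega
    rw [this, Bpul_one]
    unfold Apul; split_ifs <;> omega
  · have hne : n+2-c+1 ≠ 1 := by omega
    unfold Bpul
    rw [if_neg hne]
    have e1 : n+1-1 = n := by omega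
    have e2 : n+2-c+1-1 = n+2-c := by omega
    rw [e1, e2]
    exact Apul_rec h1 (by omega)

lemma circled_iff : ∀ n, 1 ≤ n → ∀ r c, (Circled n (r, c) ↔
    (1 ≤ r ∧ r ≤ n ∧ 1 ≤ c ∧ c ≤ n ∧ n + 1 ≤ Apul n c + Bpul n r)) := by
  intro n
  induction n using Nat.strong_induction_on with
  | _ n ih =>
    intro hn r c
    match n, hn with
    | 1, _ =>
      show (r, c) = (1, 1) ↔ _
      constructor
      · rintro h
        have : r = 1 ∧ c = 1 := by
          constructor <;> [exact congrArg Prod.fst h; exact congrArg Prod.snd h]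
        obtain ⟨rfl, rfl⟩ := this
        refine ⟨le_refl _, le_refl _, le_refl _, le_refl _, ?_⟩
        rw [Bpul_one, Apul_one le_rfl]
      · rintro ⟨h1, h2, h3, h4, h5⟩
        have : r = 1 := by omega
        have : c = 1 := by omega
        subst_vars; rfl
    | (n + 2), _ =>
      show (1 ≤ r ∧ r ≤ n + 2 ∧ 1 ≤ c ∧ c ≤ n + 2 ∧
        (r = 1 ∨ (2 ≤ r ∧ 2 ≤ c ∧ Circled (n + 1) (n + 2 - c + 1, r - 1)))) ↔ _
      constructor
      · rintro ⟨h1, h2, h3, h4, h5⟩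
        refine ⟨h1, h2, h3, h4, ?_⟩
        rcases h5 with rfl | ⟨hr2, hc2, hcirc⟩
        · rw [Bpul_one]
          have := Apul_range (n := n+2) h3 h4
          omega
        · rw [ih (n+1) (by omega) (by omega) _ _] at hcirc
          obtain ⟨_, _, _, _, hsum⟩ := hcirc
          have hA := Apul_eq_Bpul hc2 h4
          have hB : Bpul (n+2) r = Apul (n+1) (r-1) := by
            unfold Bpul; rw [if_neg (by omega)]; norm_num
          omega
      · rintro ⟨h1, h2, h3, h4, hsum⟩
        refine ⟨h1, h2, h3, h4, ?_⟩
        by_cases hr : r = 1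
        · left; exact hr
        · right
          have hr2 : 2 ≤ r := by omega
          have hB : Bpul (n+2) r = Apul (n+1) (r-1) := by
            unfold Bpul; rw [if_neg (by omega)]; norm_num
          have hAr := Apul_range (n := n+1) (c := r-1) (by omega) (by omega)
          have hc2 : 2 ≤ c := by
            by_contra hc
            have hc1 : c = 1 := by omega
            subst hc1
            rw [Apul_one (by omega)] at hsum
            omega
          refine ⟨hr2, hc2, ?_⟩
          rw [ih (n+1) (by omega) (by omega) _ _]
          have hA := Apul_eq_Bpul hc2 h4
          refine ⟨by omega, by omega, by omega, by omega, by omega⟩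

open Finset

/-- The circled set as a finset. -/
def CSet (n : ℕ) : Finset (ℕ × ℕ) :=
  (Finset.Icc 1 n ×ˢ Finset.Icc 1 n).filter (fun p => n + 1 ≤ Apul n p.2 + Bpul n p.1)

lemma mem_CSet {n : ℕ} (hn : 1 ≤ n) {p : ℕ × ℕ} : p ∈ CSet n ↔ Circled n p := by
  obtain ⟨r, c⟩ := p
  rw [circled_iff n hn r c]
  simp only [CSet, Finset.mem_filter, Finset.mem_product, Finset.mem_Icc]
  tauto

lemma filter_card_of_image {s : Finset ℕ} {g : ℕ → ℕ}
    (hmem : ∀ x ∈ s, g x ∈ s) (hsurj : ∀ y ∈ s, ∃ x ∈ s, g x = y)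
    (hinj : ∀ x ∈ s, ∀ y ∈ s, g x = g y → x = y)
    (p : ℕ → Prop) [DecidablePred p] :
    (s.filter (fun x => p (g x))).card = (s.filter p).card := by
  apply Finset.card_bij (fun a _ => g a)
  · intro a ha
    simp only [Finset.mem_filter] at ha ⊢
    exact ⟨hmem a ha.1, ha.2⟩
  · intro a ha b hb h
    simp only [Finset.mem_filter] at ha hb
    exact hinj a ha.1 b hb.1 h
  · intro b hb
    simp only [Finset.mem_filter] at hb
    obtain ⟨x, hx, hgx⟩ := hsurj b hb.1
    exact ⟨x, by simp only [Finset.mem_filter]; exact ⟨⟨hx, by rw [hgx]; exact hb.2⟩, hgx⟩⟩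

lemma sum_comp_of_image {s : Finset ℕ} {g : ℕ → ℕ}
    (hmem : ∀ x ∈ s, g x ∈ s) (hsurj : ∀ y ∈ s, ∃ x ∈ s, g x = y)
    (hinj : ∀ x ∈ s, ∀ y ∈ s, g x = g y → x = y)
    (F : ℕ → ℕ) :
    ∑ x ∈ s, F (g x) = ∑ y ∈ s, F y := by
  apply Finset.sum_bij (fun a _ => g a)
  · intro a ha; exact hmem a ha
  · intro a ha b hb h; exact hinj a ha b hb h
  · intro b hb; obtain ⟨x, hx, hgx⟩ := hsurj b hb; exact ⟨x, hx, hgx⟩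
  · intro a ha; rfl

lemma Apul_mem {n : ℕ} : ∀ x ∈ Finset.Icc 1 n, Apul n x ∈ Finset.Icc 1 n := by
  intro x hx
  rw [Finset.mem_Icc] at hx ⊢
  exact Apul_range hx.1 hx.2

lemma Apul_surj {n : ℕ} : ∀ y ∈ Finset.Icc 1 n, ∃ x ∈ Finset.Icc 1 n, Apul n x = y := by
  intro y hy
  exact ⟨Apul n y, Apul_mem y hy, by rw [Finset.mem_Icc] at hy; exact Apul_invol hy.1 hy.2⟩

lemma Apul_inj {n : ℕ} : ∀ x ∈ Finset.Icc 1 n, ∀ y ∈ Finset.Icc 1 n,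
    Apul n x = Apul n y → x = y := by
  intro x hx y hy h
  rw [Finset.mem_Icc] at hx hy
  have h1 := Apul_invol hx.1 hx.2
  have h2 := Apul_invol hy.1 hy.2
  rw [h] at h1
  omega

lemma Bpul_mem {n : ℕ} (hn : 1 ≤ n) : ∀ x ∈ Finset.Icc 1 n, Bpul n x ∈ Finset.Icc 1 n := by
  intro x hx
  rw [Finset.mem_Icc] at hx ⊢
  exact Bpul_range hx.1 hx.2

lemma Bpul_inj {n : ℕ} (hn : 1 ≤ n) : ∀ x ∈ Finset.Icc 1 n, ∀ y ∈ Finset.Icc 1 n,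
    Bpul n x = Bpul n y → x = y := by
  intro x hx y hy h
  rw [Finset.mem_Icc] at hx hy
  by_cases hx1 : x = 1 <;> by_cases hy1 : y = 1
  · omega
  · subst hx1
    rw [Bpul_one] at h
    unfold Bpul at h
    rw [if_neg hy1] at h
    have := Apul_range (n := n-1) (c := y-1) (by omega) (by omega)
    omega
  · subst hy1
    rw [Bpul_one] at h
    unfold Bpul at h
    rw [if_neg hx1] at h
    have := Apul_range (n := n-1) (c := x-1) (by omega) (by omega)
    omega
  · unfold Bpul at h
    rw [if_neg hx1, if_neg hy1] at h
    have := Apul_inj (n := n-1) (x-1) (by rw [Finset.mem_Icc]; omega)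
      (y-1) (by rw [Finset.mem_Icc]; omega) h
    omega

lemma Bpul_surj {n : ℕ} (hn : 1 ≤ n) : ∀ y ∈ Finset.Icc 1 n, ∃ x ∈ Finset.Icc 1 n, Bpul n x = y := by
  intro y hy
  rw [Finset.mem_Icc] at hy
  by_cases hyn : y = n
  · exact ⟨1, by rw [Finset.mem_Icc]; omega, by rw [Bpul_one, hyn]⟩
  · obtain ⟨x, hx, hgx⟩ := Apul_surj (n := n-1) y (by rw [Finset.mem_Icc]; omega)
    rw [Finset.mem_Icc] at hx
    refine ⟨x + 1, by rw [Finset.mem_Icc]; omega, ?_⟩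
    unfold Bpul
    rw [if_neg (by omega)]
    simpa using hgx

lemma filter_le_Icc {n k : ℕ} (hk : 1 ≤ k) :
    (Finset.Icc 1 n).filter (fun v => k ≤ v) = Finset.Icc k n := by
  ext x
  simp only [Finset.mem_filter, Finset.mem_Icc]
  omega

lemma card_filter_Apul {n k : ℕ} (hk : 1 ≤ k) :
    ((Finset.Icc 1 n).filter (fun c => k ≤ Apul n c)).card = n + 1 - k := by
  rw [filter_card_of_image Apul_mem Apul_surj Apul_inj (fun v => k ≤ v),
    filter_le_Icc hk, Nat.card_Icc]

lemma card_filter_Bpul {n k : ℕ} (hn : 1 ≤ n) (hk : 1 ≤ k) :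
    ((Finset.Icc 1 n).filter (fun r => k ≤ Bpul n r)).card = n + 1 - k := by
  rw [filter_card_of_image (Bpul_mem hn) (Bpul_surj hn) (Bpul_inj hn) (fun v => k ≤ v),
    filter_le_Icc hk, Nat.card_Icc]

/-- Number of circled cells in column `c` is `Apul n c`. -/
lemma col_filter_eq {n c : ℕ} (hc : c ∈ Finset.Icc 1 n) :
    (CSet n).filter (fun p => p.2 = c) =
      ((Finset.Icc 1 n).filter (fun r => n + 1 ≤ Apul n c + Bpul n r)).image (fun r => (r, c)) := by
  ext ⟨a, b⟩
  simp only [CSet, Finset.mem_filter, Finset.mem_product, Finset.mem_image, Finset.mem_Icc]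
  constructor
  · rintro ⟨⟨⟨ha, hb⟩, hsum⟩, rfl⟩
    exact ⟨a, ⟨ha, hsum⟩, rfl⟩
  · rintro ⟨r, ⟨hr, hsum⟩, heq⟩
    rw [Finset.mem_Icc] at hc
    obtain ⟨rfl, rfl⟩ : r = a ∧ c = b := by
      constructor <;> [exact congrArg Prod.fst heq; exact congrArg Prod.snd heq]
    exact ⟨⟨⟨hr, hc⟩, hsum⟩, rfl⟩

lemma col_card {n c : ℕ} (hn : 1 ≤ n) (hc : c ∈ Finset.Icc 1 n) :
    ((CSet n).filter (fun p => p.2 = c)).card = Apul n c := by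
  rw [col_filter_eq hc, Finset.card_image_of_injective _ (fun x y h => congrArg Prod.fst h)]
  rw [Finset.mem_Icc] at hc
  have hA := Apul_range hc.1 hc.2
  have : ((Finset.Icc 1 n).filter (fun r => n + 1 ≤ Apul n c + Bpul n r)) =
      ((Finset.Icc 1 n).filter (fun r => n + 1 - Apul n c ≤ Bpul n r)) := by
    apply Finset.filter_congr
    intro x _
    constructor <;> intro h <;> omega
  rw [this, card_filter_Bpul hn (by omega)]
  omega

/-- Number of circled cells in row `r` is `Bpul n r`. -/
lemma row_filter_eq {n r : ℕ} (hr : r ∈ Finset.Icc 1 n) :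
    (CSet n).filter (fun p => p.1 = r) =
      ((Finset.Icc 1 n).filter (fun c => n + 1 ≤ Apul n c + Bpul n r)).image (fun c => (r, c)) := by
  ext ⟨a, b⟩
  simp only [CSet, Finset.mem_filter, Finset.mem_product, Finset.mem_image, Finset.mem_Icc]
  constructor
  · rintro ⟨⟨⟨ha, hb⟩, hsum⟩, rfl⟩
    exact ⟨b, ⟨hb, hsum⟩, rfl⟩
  · rintro ⟨v, ⟨hv, hsum⟩, heq⟩
    rw [Finset.mem_Icc] at hr
    obtain ⟨rfl, rfl⟩ : r = a ∧ v = b := by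
      constructor <;> [exact congrArg Prod.fst heq; exact congrArg Prod.snd heq]
    exact ⟨⟨⟨hr, hv⟩, hsum⟩, rfl⟩

lemma row_card {n r : ℕ} (hn : 1 ≤ n) (hr : r ∈ Finset.Icc 1 n) :
    ((CSet n).filter (fun p => p.1 = r)).card = Bpul n r := by
  rw [row_filter_eq hr, Finset.card_image_of_injective _ (fun x y h => congrArg Prod.snd h)]
  rw [Finset.mem_Icc] at hr
  have hB := Bpul_range hr.1 hr.2
  have : ((Finset.Icc 1 n).filter (fun c => n + 1 ≤ Apul n c + Bpul n r)) =
      ((Finset.Icc 1 n).filter (fun c => n + 1 - Bpul n r ≤ Apul n c)) := by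
    apply Finset.filter_congr
    intro x _
    constructor <;> intro h <;> omega
  rw [this, card_filter_Apul (by omega)]
  omega

lemma CSet_card {n : ℕ} (hn : 1 ≤ n) :
    (CSet n).card = ∑ v ∈ Finset.Icc 1 n, v := by
  rw [Finset.card_eq_sum_card_fiberwise (f := Prod.fst) (t := Finset.Icc 1 n)
    (fun p hp => by
      simp only [Finset.mem_coe, CSet, Finset.mem_filter, Finset.mem_product] at hp
      exact hp.1.1)]
  calc ∑ r ∈ Finset.Icc 1 n, ((CSet n).filter (fun p => p.1 = r)).card
      = ∑ r ∈ Finset.Icc 1 n, Bpul n r := by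
        apply Finset.sum_congr rfl
        intro r hr
        exact row_card hn hr
    _ = ∑ v ∈ Finset.Icc 1 n, v :=
        sum_comp_of_image (Bpul_mem hn) (Bpul_surj hn) (Bpul_inj hn) id

lemma sum_min_aux (m : ℕ) : ∀ n : ℕ,
    ∑ k ∈ Finset.Icc 1 n, min k m + ∑ j ∈ Finset.Icc 1 (n - m), j
      = ∑ k ∈ Finset.Icc 1 n, k := by
  intro n
  induction n with
  | zero => simp
  | succ n ih =>
    rw [Finset.sum_Icc_succ_top (by omega : 1 ≤ n + 1),
        Finset.sum_Icc_succ_top (by omega : 1 ≤ n + 1)]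
    by_cases hm : m ≤ n
    · have h1 : n + 1 - m = (n - m) + 1 := by omega
      rw [h1, Finset.sum_Icc_succ_top (by omega : 1 ≤ n - m + 1)]
      have h2 : min (n+1) m = m := by omega
      omega
    · have h1 : n + 1 - m = 0 := by omega
      have h3 : min (n+1) m = n+1 := by omega
      rw [(by omega : n - m = 0)] at ih
      rw [h1, h3]
      rw [show Finset.Icc 1 0 = ∅ from Finset.Icc_eq_empty (by omega)] at ih ⊢
      simp only [Finset.sum_empty] at ih ⊢
      omega

lemma sum_Icc_split {v n : ℕ} (hv : 1 ≤ v) (hvn : v ≤ n + 1) :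
    ∑ j ∈ Finset.Icc 1 (v - 1), j + ∑ w ∈ Finset.Icc v n, w = ∑ k ∈ Finset.Icc 1 n, k := by
  rw [← Finset.sum_union (by
    rw [Finset.disjoint_left]
    intro a ha hb
    rw [Finset.mem_Icc] at ha hb
    omega)]
  congr 1
  ext x
  simp only [Finset.mem_union, Finset.mem_Icc]
  omega

lemma sum_min_eq {v n : ℕ} (hv : 1 ≤ v) (hvn : v ≤ n + 1) :
    ∑ k ∈ Finset.Icc 1 n, min k (n + 1 - v) = ∑ w ∈ Finset.Icc v n, w := by
  have h1 := sum_min_aux (n + 1 - v) n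
  have h2 := sum_Icc_split hv hvn
  have h3 : n - (n + 1 - v) = v - 1 := by omega
  rw [h3] at h1
  omega

section solution

variable {n : ℕ} {f : ℕ × ℕ → ℕ}

lemma CSet_bounds {p : ℕ × ℕ} (hp : p ∈ CSet n) :
    1 ≤ p.1 ∧ p.1 ≤ n ∧ 1 ≤ p.2 ∧ p.2 ≤ n := by
  simp only [CSet, Finset.mem_filter, Finset.mem_product, Finset.mem_Icc] at hp
  exact ⟨hp.1.1.1, hp.1.1.2, hp.1.2.1, hp.1.2.2⟩

lemma f_mem_Icc (hf : IsPulsarSolution n f) {p : ℕ × ℕ} (hp : p ∈ CSet n) :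
    f p ∈ Finset.Icc 1 n := by
  obtain ⟨h1, h2, h3, h4⟩ := CSet_bounds hp
  have := hf.1.1 p.1 p.2 h1 h2 h3 h4
  rw [Finset.mem_Icc]
  simpa using this

lemma fiber_card (hn : 1 ≤ n) (hf : IsPulsarSolution n f) :
    ∀ v ∈ Finset.Icc 1 n, ((CSet n).filter (fun p => f p = v)).card = v := by
  have hfib : ∀ v : ℕ, ((CSet n).filter (fun p => f p = v)).Nonempty →
      ((CSet n).filter (fun p => f p = v)).card = v := by
    intro v ⟨p, hp⟩
    rw [Finset.mem_filter] at hp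
    have hcond := hf.2 p ((mem_CSet hn).mp hp.1)
    have hset : {q : ℕ × ℕ | Circled n q ∧ f q = f p} =
        ↑((CSet n).filter (fun q => f q = f p)) := by
      ext q
      simp only [Set.mem_setOf_eq, Finset.coe_filter, mem_CSet hn]
    rw [hset, Set.ncard_coe_finset] at hcond
    rw [← hp.2, ← hcond]
  have hle : ∀ v ∈ Finset.Icc 1 n, ((CSet n).filter (fun p => f p = v)).card ≤ v := by
    intro v hv
    rcases Finset.eq_empty_or_nonempty ((CSet n).filter (fun p => f p = v)) with he | hne
    · rw [he]
      simp only [Finset.card_empty]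
      rw [Finset.mem_Icc] at hv
      omega
    · rw [hfib v hne]
  have hsum : ∑ v ∈ Finset.Icc 1 n, ((CSet n).filter (fun p => f p = v)).card
      = ∑ v ∈ Finset.Icc 1 n, v := by
    rw [← Finset.card_eq_sum_card_fiberwise (fun p hp => f_mem_Icc hf hp)]
    exact CSet_card hn
  exact fun v hv => (Finset.sum_eq_sum_iff_of_le hle).mp hsum v hv

lemma big_card (hn : 1 ≤ n) (hf : IsPulsarSolution n f) {v : ℕ} (hv : 1 ≤ v) :
    ((CSet n).filter (fun p => v ≤ f p)).card = ∑ w ∈ Finset.Icc v n, w := by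
  rw [Finset.card_eq_sum_card_fiberwise (f := f) (t := Finset.Icc 1 n)
    (fun p hp => f_mem_Icc hf (Finset.mem_of_mem_filter p hp))]
  rw [← filter_le_Icc hv, Finset.sum_filter]
  apply Finset.sum_congr rfl
  intro w hw
  rw [Finset.filter_filter]
  by_cases hvw : v ≤ w
  · rw [if_pos hvw]
    have heq : (CSet n).filter (fun p => v ≤ f p ∧ f p = w)
        = (CSet n).filter (fun p => f p = w) := by
      apply Finset.filter_congr
      intro p _
      constructor
      · rintro ⟨_, h⟩; exact h
      · rintro h; exact ⟨by omega, h⟩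
    rw [heq]
    exact fiber_card hn hf w hw
  · rw [if_neg hvw]
    rw [Finset.card_eq_zero, Finset.filter_eq_empty_iff]
    rintro p _ ⟨hle, heq⟩
    omega

lemma colBig_le_min (hn : 1 ≤ n) (hf : IsPulsarSolution n f) {v c : ℕ} (hv : 1 ≤ v)
    (hc : c ∈ Finset.Icc 1 n) :
    (((CSet n).filter (fun p => v ≤ f p)).filter (fun p => p.2 = c)).card
      ≤ min (Apul n c) (n + 1 - v) := by
  rw [le_min_iff]
  constructor
  · rw [← col_card hn hc]
    apply Finset.card_le_card
    intro p hp
    rw [Finset.filter_filter] at hp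
    rw [Finset.mem_filter]
    rw [Finset.mem_filter] at hp
    exact ⟨hp.1, hp.2.2⟩
  · have : (((CSet n).filter (fun p => v ≤ f p)).filter (fun p => p.2 = c)).card
        ≤ (Finset.Icc v n).card := by
      apply Finset.card_le_card_of_injOn f
      · intro p hp
        rw [Finset.filter_filter, Finset.mem_coe, Finset.mem_filter] at hp
        have := f_mem_Icc hf hp.1
        rw [Finset.mem_Icc] at this; rw [Finset.mem_coe, Finset.mem_Icc]
        exact ⟨hp.2.1, this.2⟩
      · rintro ⟨p1, p2⟩ hp ⟨q1, q2⟩ hq heq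
        rw [Finset.filter_filter, Finset.mem_coe, Finset.mem_filter] at hp hq
        obtain ⟨hp1, _, hp2⟩ := hp
        obtain ⟨hq1, _, hq2⟩ := hq
        obtain ⟨a1, a2, a3, a4⟩ := CSet_bounds hp1
        obtain ⟨b1, b2, b3, b4⟩ := CSet_bounds hq1
        simp only at hp2 hq2 a1 a2 a3 a4 b1 b2 b3 b4
        rw [Finset.mem_Icc] at hc
        by_cases h : p1 = q1
        · simp only [Prod.mk.injEq]; exact ⟨h, hp2.trans hq2.symm⟩
        · rw [hp2, hq2] at heq
          exact absurd heq (hf.1.2.2 p1 q1 c a1 a2 b1 b2 hc.1 hc.2 h)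
    rw [Nat.card_Icc] at this
    exact this

end solution

lemma surj_of_inj {s : Finset ℕ} {g : ℕ → ℕ} (hmem : ∀ x ∈ s, g x ∈ s)
    (hinj : ∀ x ∈ s, ∀ y ∈ s, g x = g y → x = y) : ∀ y ∈ s, ∃ x ∈ s, g x = y := by
  have himg : s.image g = s := Finset.eq_of_subset_of_card_le
      (Finset.image_subset_iff.mpr hmem)
      (le_of_eq (Finset.card_image_of_injOn (fun x hx y hy => hinj x hx y hy)).symm)
  intro y hy
  rw [← himg] at hy
  exact Finset.mem_image.mp hy

section solution2

variable {n : ℕ} {f : ℕ × ℕ → ℕ}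

lemma colBig_card_eq (hn : 1 ≤ n) (hf : IsPulsarSolution n f) {v : ℕ} (hv : 1 ≤ v)
    (hv2 : v ≤ n + 1) : ∀ c ∈ Finset.Icc 1 n,
    (((CSet n).filter (fun p => v ≤ f p)).filter (fun p => p.2 = c)).card
      = min (Apul n c) (n + 1 - v) := by
  have hsplit : ((CSet n).filter (fun p => v ≤ f p)).card
      = ∑ c ∈ Finset.Icc 1 n,
        (((CSet n).filter (fun p => v ≤ f p)).filter (fun p => p.2 = c)).card := by
    apply Finset.card_eq_sum_card_fiberwise (f := Prod.snd)
    intro p hp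
    have := CSet_bounds (Finset.mem_of_mem_filter p hp)
    rw [Finset.mem_coe, Finset.mem_Icc]
    exact ⟨this.2.2.1, this.2.2.2⟩
  have hmins : ∑ c ∈ Finset.Icc 1 n, min (Apul n c) (n + 1 - v)
      = ∑ w ∈ Finset.Icc v n, w := by
    rw [sum_comp_of_image Apul_mem Apul_surj Apul_inj (fun k => min k (n + 1 - v))]
    exact sum_min_eq hv hv2
  have htot : ∑ c ∈ Finset.Icc 1 n,
      (((CSet n).filter (fun p => v ≤ f p)).filter (fun p => p.2 = c)).card
      = ∑ c ∈ Finset.Icc 1 n, min (Apul n c) (n + 1 - v) := by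
    rw [← hsplit, big_card hn hf hv, hmins]
  exact (Finset.sum_eq_sum_iff_of_le
    (fun c hc => colBig_le_min hn hf hv hc)).mp htot

lemma circ_lower (hn : 1 ≤ n) (hf : IsPulsarSolution n f) :
    ∀ p ∈ CSet n, n + 1 - Apul n p.2 ≤ f p := by
  intro p hp
  obtain ⟨h1, h2, h3, h4⟩ := CSet_bounds hp
  have hc : p.2 ∈ Finset.Icc 1 n := by rw [Finset.mem_Icc]; exact ⟨h3, h4⟩
  have hA := Apul_range h3 h4
  set v := n + 1 - Apul n p.2 with hvdef
  have hv : 1 ≤ v := by omega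
  have hv2 : v ≤ n + 1 := by omega
  have hcard := colBig_card_eq hn hf hv hv2 p.2 hc
  have hmin : min (Apul n p.2) (n + 1 - v) = Apul n p.2 := by omega
  rw [hmin] at hcard
  have hsub : (((CSet n).filter (fun q => v ≤ f q)).filter (fun q => q.2 = p.2))
      ⊆ ((CSet n).filter (fun q => q.2 = p.2)) := by
    intro q hq
    rw [Finset.filter_filter] at hq
    rw [Finset.mem_filter]
    rw [Finset.mem_filter] at hq
    exact ⟨hq.1, hq.2.2⟩
  have heq := Finset.eq_of_subset_of_card_le hsub
    (by rw [hcard, col_card hn hc])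
  have hpin : p ∈ ((CSet n).filter (fun q => q.2 = p.2)) := by
    rw [Finset.mem_filter]; exact ⟨hp, rfl⟩
  rw [← heq, Finset.filter_filter, Finset.mem_filter] at hpin
  exact hpin.2.1

lemma row_count {c : ℕ} (hn : 1 ≤ n) (hc1 : 1 ≤ c) (hc2 : c ≤ n) :
    ((Finset.Icc 1 n).filter (fun r => n + 1 ≤ Apul n c + Bpul n r)).card = Apul n c := by
  have hA := Apul_range hc1 hc2
  have hcongr : ((Finset.Icc 1 n).filter (fun r => n + 1 ≤ Apul n c + Bpul n r)) =
      ((Finset.Icc 1 n).filter (fun r => n + 1 - Apul n c ≤ Bpul n r)) := by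
    apply Finset.filter_congr
    intro x _
    constructor <;> intro h <;> omega
  rw [hcongr, card_filter_Bpul hn (by omega)]
  omega

lemma top_row_eq (hn : 1 ≤ n) (hf : IsPulsarSolution n f) :
    ∀ c ∈ Finset.Icc 1 n, f (1, c) = n + 1 - Apul n c := by
  have hkey : ∀ c ∈ Finset.Icc 1 n, n + 1 - Apul n c ≤ f (1, c) := by
    intro c hc
    rw [Finset.mem_Icc] at hc
    have hA := Apul_range hc.1 hc.2
    have hmem : ((1 : ℕ), c) ∈ CSet n := by
      simp only [CSet, Finset.mem_filter, Finset.mem_product, Finset.mem_Icc]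
      refine ⟨⟨⟨le_refl 1, hn⟩, hc⟩, ?_⟩
      rw [Bpul_one]
      omega
    exact circ_lower hn hf (1, c) hmem
  -- g and h
  set g : ℕ → ℕ := fun c => n + 1 - Apul n c with hgdef
  set F : ℕ → ℕ := fun c => f (1, c) with hFdef
  have hgmem : ∀ x ∈ Finset.Icc 1 n, g x ∈ Finset.Icc 1 n := by
    intro x hx
    rw [Finset.mem_Icc] at hx ⊢
    have := Apul_range hx.1 hx.2
    simp only [hgdef]
    omega
  have hginj : ∀ x ∈ Finset.Icc 1 n, ∀ y ∈ Finset.Icc 1 n, g x = g y → x = y := by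
    intro x hx y hy h
    rw [Finset.mem_Icc] at hx hy
    have h1 := Apul_range hx.1 hx.2
    have h2 := Apul_range hy.1 hy.2
    apply Apul_inj x (by rw [Finset.mem_Icc]; exact hx) y (by rw [Finset.mem_Icc]; exact hy)
    simp only [hgdef] at h
    omega
  have hFmem : ∀ x ∈ Finset.Icc 1 n, F x ∈ Finset.Icc 1 n := by
    intro x hx
    rw [Finset.mem_Icc] at hx ⊢
    exact hf.1.1 1 x (le_refl 1) hn hx.1 hx.2
  have hFinj : ∀ x ∈ Finset.Icc 1 n, ∀ y ∈ Finset.Icc 1 n, F x = F y → x = y := by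
    intro x hx y hy h
    rw [Finset.mem_Icc] at hx hy
    by_contra hne
    exact hf.1.2.1 1 x y (le_refl 1) hn hx.1 hx.2 hy.1 hy.2 hne h
  have hsumg : ∑ c ∈ Finset.Icc 1 n, g c = ∑ v ∈ Finset.Icc 1 n, v :=
    sum_comp_of_image hgmem (surj_of_inj hgmem hginj) hginj id
  have hsumF : ∑ c ∈ Finset.Icc 1 n, F c = ∑ v ∈ Finset.Icc 1 n, v :=
    sum_comp_of_image hFmem (surj_of_inj hFmem hFinj) hFinj id
  have := (Finset.sum_eq_sum_iff_of_le hkey).mp (by rw [hsumg, hsumF])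
  intro c hc
  exact (this c hc).symm

end solution2

/-- In any solution of the `n × n` Pulsar puzzle, the top-row entry in column `c` is
`n + 1` minus the number of circled cells in column `c`; equivalently one more than
the number of uncircled cells in column `c`. -/
theorem pulsar_top_row_formula (n : ℕ) (hn : 1 ≤ n) (f : ℕ × ℕ → ℕ)
    (hf : IsPulsarSolution n f) :
    ∀ c, 1 ≤ c → c ≤ n →
      f (1, c) = n + 1 - Set.ncard {r : ℕ | Circled n (r, c)} ∧
      f (1, c) = Set.ncard {r : ℕ | 1 ≤ r ∧ r ≤ n ∧ ¬ Circled n (r, c)} + 1 := by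
  intro c hc1 hc2
  have hA := Apul_range hc1 hc2
  have hmain := top_row_eq hn hf c (by rw [Finset.mem_Icc]; exact ⟨hc1, hc2⟩)
  have hset1 : {r : ℕ | Circled n (r, c)} =
      ↑((Finset.Icc 1 n).filter (fun r => n + 1 ≤ Apul n c + Bpul n r)) := by
    ext r
    rw [Set.mem_setOf_eq, circled_iff n hn r c]
    simp only [Finset.coe_filter, Set.mem_setOf_eq, Finset.mem_Icc]
    constructor
    · rintro ⟨a, b, _, _, e⟩; exact ⟨⟨a, b⟩, e⟩
    · rintro ⟨⟨a, b⟩, e⟩; exact ⟨a, b, hc1, hc2, e⟩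
  have hcard1 : Set.ncard {r : ℕ | Circled n (r, c)} = Apul n c := by
    rw [hset1, Set.ncard_coe_finset, row_count hn hc1 hc2]
  have hset2 : {r : ℕ | 1 ≤ r ∧ r ≤ n ∧ ¬ Circled n (r, c)} =
      ↑((Finset.Icc 1 n).filter (fun r => ¬ (n + 1 ≤ Apul n c + Bpul n r))) := by
    ext r
    simp only [Set.mem_setOf_eq, circled_iff n hn r c, Finset.coe_filter, Finset.mem_Icc]
    constructor
    · rintro ⟨a, b, h⟩
      exact ⟨⟨a, b⟩, fun e => h ⟨a, b, hc1, hc2, e⟩⟩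
    · rintro ⟨⟨a, b⟩, h⟩
      exact ⟨a, b, fun e => h e.2.2.2.2⟩
  have hcard2 : Set.ncard {r : ℕ | 1 ≤ r ∧ r ≤ n ∧ ¬ Circled n (r, c)} = n - Apul n c := by
    rw [hset2, Set.ncard_coe_finset]
    have := Finset.card_filter_add_card_filter_not
      (s := Finset.Icc 1 n) (p := fun r => n + 1 ≤ Apul n c + Bpul n r)
    rw [row_count hn hc1 hc2] at this
    have hIcc : (Finset.Icc 1 n).card = n := by rw [Nat.card_Icc]; omega
    omega
  rw [hcard1, hcard2, hmain]
  omega
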